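/- Let m₁, m₂, m₃, m₄, m₅, c₂ be real constants with m₁,…,m₅ nonzero, m₃ + m₅ ≠ 0 and m₄/(m₃+m₅) ≤ 0, let c₁ be a nonzero constant with c₁m₁/m₂ > 0, and let k₂ ∈ ℝ. Set k := √(−m₄/(m₃+m₅)), b := √(c₁m₁/m₂) and a₀ := c₁b³/m₂. Let G : ℝ → ℝ be differentiable with G(t) ≠ 0 for all t, let H : ℝ → ℝ be differentiable with H(t) ≠ 0 for all t, and let 𝒢 : ℝ → ℝ be differentiable with 𝒢'(t) = G(t) for all t. Then the function ũ(t̃,x̃) := (m₃c₁G(t̃)/(m₂H(t̃))) · c₂ · exp( k( b(x̃+k₂) + (m₄(m₂m₅ + m₂m₃ − m₁m₄)/(m₃+m₅)²) · a₀ · 𝒢(t̃) ) ) satisfies, at every point (t̃,x̃): ũ_{t̃} + G(t̃) ũ_{x̃x̃x̃x̃x̃} + c₁G(t̃) ũ_{x̃x̃x̃} + H(t̃) ũ ũ_{x̃x̃x̃} + (c₁m₁m₄/(m₂m₃))H(t̃) ũ ũ_{x̃} + (m₅/m₃)H(t̃) ũ_{x̃} ũ_{x̃x̃} + ((G(t̃)H'(t̃)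 − G'(t̃)H(t̃))/(G(t̃)H(t̃))) ũ = 0. -/

import Mathlib

/-- Partial derivative of `u(t,x)` with respect to `t`. -/
noncomputable def pdt (u : ℝ × ℝ → ℝ) (t x : ℝ) : ℝ :=
  deriv (fun s => u (s, x)) t

/-- `n`-th partial derivative of `u(t,x)` with respect to `x`. -/
noncomputable def pdx (n : ℕ) (u : ℝ × ℝ → ℝ) (t x : ℝ) : ℝ :=
  iteratedDeriv n (fun y => u (t, y)) x

lemma iter_exp (r s C : ℝ) : ∀ (n : ℕ) (x : ℝ),
    iteratedDeriv n (fun y => C * Real.exp (r * y + s)) x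
      = r ^ n * (C * Real.exp (r * x + s)) := by
  intro n
  induction n with
  | zero => intro x; simp
  | succ n ih =>
    intro x
    have hfun : iteratedDeriv n (fun y => C * Real.exp (r * y + s))
        = fun y => r ^ n * (C * Real.exp (r * y + s)) := funext ih
    rw [iteratedDeriv_succ, hfun]
    have h0 : HasDerivAt (fun y : ℝ => r * y + s) r x := by
      simpa using ((hasDerivAt_id x).const_mul r).add_const s
    have h1 : HasDerivAt (fun y => r ^ n * (C * Real.exp (r * y + s)))
        (r ^ (n+1) * (C * Real.exp (r * x + s))) x := by
      have := (h0.exp).const_mul (r ^ n * C)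
      rw [show (fun y => r ^ n * (C * Real.exp (r * y + s)))
          = fun y => r ^ n * C * Real.exp (r * y + s) from funext fun y => by ring,
        show r ^ (n+1) * (C * Real.exp (r * x + s))
          = r ^ n * C * (Real.exp (r * x + s) * r) by ring]
      exact this
    exact h1.deriv

set_option maxHeartbeats 1000000 in
/-- The transported exponential solution of the damped variable-coefficient
fifth-order KdV equation (27). -/
theorem exponential_solution_damped_equation
    (m₁ m₂ m₃ m₄ m₅ c₂ : ℝ)
    (hm₁ : m₁ ≠ 0) (hm₂ : m₂ ≠ 0) (hm₃ : m₃ ≠ 0) (hm₄ : m₄ ≠ 0) (hm₅ : m₅ ≠ 0)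
    (hne : m₃ + m₅ ≠ 0) (hsign : m₄ / (m₃ + m₅) ≤ 0)
    (c₁ : ℝ) (hc₁ : c₁ ≠ 0) (hpos : c₁ * m₁ / m₂ > 0) (k₂ : ℝ)
    (k b a₀ : ℝ) (hk : k = Real.sqrt (-m₄ / (m₃ + m₅)))
    (hb : b = Real.sqrt (c₁ * m₁ / m₂)) (ha₀ : a₀ = c₁ * b ^ 3 / m₂)
    (G : ℝ → ℝ) (hG : Differentiable ℝ G) (hGne : ∀ t, G t ≠ 0)
    (H : ℝ → ℝ) (hH : Differentiable ℝ H) (hHne : ∀ t, H t ≠ 0)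
    (𝒢 : ℝ → ℝ) (h𝒢 : Differentiable ℝ 𝒢) (h𝒢' : ∀ t, deriv 𝒢 t = G t)
    (ut : ℝ × ℝ → ℝ)
    (hut : ∀ p : ℝ × ℝ,
      ut p = m₃ * c₁ * G p.1 / (m₂ * H p.1) * c₂
        * Real.exp (k * (b * (p.2 + k₂)
            + m₄ * (m₂ * m₅ + m₂ * m₃ - m₁ * m₄) / (m₃ + m₅) ^ 2 * a₀ * 𝒢 p.1))) :
    ∀ t x,
      pdt ut t x + G t * pdx 5 ut t x + c₁ * G t * pdx 3 ut t x
        + H t * ut (t, x) * pdx 3 ut t x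
        + c₁ * m₁ * m₄ / (m₂ * m₃) * H t * ut (t, x) * pdx 1 ut t x
        + m₅ / m₃ * H t * pdx 1 ut t x * pdx 2 ut t x
        + (G t * deriv H t - deriv G t * H t) / (G t * H t) * ut (t, x) = 0 := by
  intro t x
  have hk2 : k ^ 2 = -m₄ / (m₃ + m₅) := by
    rw [hk]; exact Real.sq_sqrt (by rw [neg_div]; linarith)
  have hb2 : b ^ 2 = c₁ * m₁ / m₂ := by
    rw [hb]; exact Real.sq_sqrt hpos.le
  -- abbreviations
  set D : ℝ := m₄ * (m₂ * m₅ + m₂ * m₃ - m₁ * m₄) / (m₃ + m₅) ^ 2 * a₀ with hD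
  set C : ℝ := m₃ * c₁ * G t / (m₂ * H t) * c₂ with hC
  set E : ℝ := Real.exp ((k * b) * x + (k * b * k₂ + k * D * 𝒢 t)) with hE
  -- spatial derivatives
  have hxfun : (fun y => ut (t, y))
      = fun y => C * Real.exp ((k * b) * y + (k * b * k₂ + k * D * 𝒢 t)) := by
    funext y
    rw [hut (t, y)]
    congr 1
    ring
  have hpdx : ∀ n : ℕ, pdx n ut t x = (k * b) ^ n * (C * E) := by
    intro n
    rw [pdx, hxfun, iter_exp, hE]
  -- time derivative
  have hu : ut (t, x) = C * E := by
    have := hpdx 0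
    simpa [pdx] using this
  have htfun : (fun s => ut (s, x))
      = fun s => (m₃ * c₁ * c₂ / m₂) * (G s / H s
          * Real.exp ((k * D) * 𝒢 s + k * (b * (x + k₂)))) := by
    funext s
    rw [hut (s, x)]
    rw [show k * (b * (x + k₂) + D * 𝒢 s) = (k * D) * 𝒢 s + k * (b * (x + k₂)) from by ring]
    ring
  have hA : HasDerivAt (fun s => G s / H s)
      ((deriv G t * H t - G t * deriv H t) / (H t) ^ 2) t :=
    ((hG t).hasDerivAt).div ((hH t).hasDerivAt) (hHne t)
  have hExp : HasDerivAt (fun s => Real.exp ((k * D) * 𝒢 s + k * (b * (x + k₂))))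
      (Real.exp ((k * D) * 𝒢 t + k * (b * (x + k₂))) * (k * D * G t)) t := by
    have h1 : HasDerivAt (fun s => (k * D) * 𝒢 s + k * (b * (x + k₂))) (k * D * G t) t := by
      have := (((h𝒢 t).hasDerivAt).const_mul (k * D)).add_const (k * (b * (x + k₂)))
      simpa [h𝒢' t] using this
    exact h1.exp
  have hprod := (hA.mul hExp).const_mul (m₃ * c₁ * c₂ / m₂)
  have hE2 : Real.exp ((k * D) * 𝒢 t + k * (b * (x + k₂))) = E := by
    rw [hE]; congr 1; ring
  have hpdt : pdt ut t x
      = (m₃ * c₁ * c₂ / m₂) * ((deriv G t * H t - G t * deriv H t) / (H t) ^ 2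
            * E + G t / H t * (E * (k * D * G t))) := by
    rw [pdt, htfun]
    rw [← hE2]
    exact hprod.deriv
  -- eliminate m₄, m₁, a₀
  have hm4 : m₄ = -(k ^ 2) * (m₃ + m₅) := by
    field_simp at hk2; linarith
  have hm1 : m₁ = m₂ * b ^ 2 / c₁ := by
    field_simp at hb2 ⊢; linarith
  subst ha₀ hm4 hm1
  have hDval : D = -(k ^ 2) * b ^ 3 * (c₁ + k ^ 2 * b ^ 2) := by
    rw [hD]; field_simp; ring
  rw [hpdt, hpdx 5, hpdx 3, hpdx 2, hpdx 1, hu, hC, hDval]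
  field_simp [hne, hHne t, hGne t]
  ring_nf
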